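/- Let T ⊆ ℝ² be a convex set and let q ∈ ℝ² with q ∉ T. Let a, c ∈ ℝ² be such that a − q and c − q are linearly independent, openSegment ℝ q a meets T, and openSegment ℝ q c meets T. Then for all real numbers s > 0 and t > 0, setting b := q + s • (a − q) + t • (c − q), the open ray {q + λ • (b − q) | λ > 0} meets T. (This is the geometric content of Observation 3.1 of the paper: the directions from q in which a convex blocker T obstructs the view form an angularly contiguous set, so the vertices of the visibility polygon of q hidden by inserting a vertex are contiguous along its boundary.) -/

import Mathlib

open Set

/-- Points of the plane. -/
abbrev Pt := EuclideanSpace ℝ (Fin 2)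

/-- `x` is an endpoint of the (nondegenerate) closed segment `s`. -/
def IsSegEndpoint (x : Pt) (s : Set Pt) : Prop :=
  ∃ a b : Pt, a ≠ b ∧ s = segment ℝ a b ∧ (x = a ∨ x = b)

/-- An obstacle set: a finite set of nondegenerate closed segments such that any two
distinct segments intersect at most in a point that is a common endpoint of both. -/
def IsObstacleSet (E : Set (Set Pt)) : Prop :=
  E.Finite ∧
  (∀ s ∈ E, ∃ a b : Pt, a ≠ b ∧ s = segment ℝ a b) ∧
  (∀ s ∈ E, ∀ t ∈ E, s ≠ t → ∀ x ∈ s ∩ t, IsSegEndpoint x s ∧ IsSegEndpoint x t)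

/-- `V(E)`: the set of all endpoints of segments of `E`. -/
def Vset (E : Set (Set Pt)) : Set Pt := {x | ∃ s ∈ E, IsSegEndpoint x s}

/-- Two points `p ≠ q` are mutually visible with respect to `E` if the open segment
joining them is disjoint from every segment of `E`. -/
def MutuallyVisible (E : Set (Set Pt)) (p q : Pt) : Prop :=
  p ≠ q ∧ ∀ s ∈ E, openSegment ℝ p q ∩ s = ∅

/-- The cone at `q` spanned by `a` and `b`. -/
def Cone (q a b : Pt) : Set Pt :=
  {x | ∃ s t : ℝ, 0 ≤ s ∧ 0 ≤ t ∧ x = q + s • (a - q) + t • (b - q)}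

theorem stmt_5
    (T : Set Pt) (hT : Convex ℝ T) (q : Pt) (hq : q ∉ T)
    (a c : Pt) (hli : LinearIndependent ℝ ![a - q, c - q])
    (ha : (openSegment ℝ q a ∩ T).Nonempty)
    (hc : (openSegment ℝ q c ∩ T).Nonempty)
    (s t : ℝ) (hs : 0 < s) (ht : 0 < t)
    (b : Pt) (hb : b = q + s • (a - q) + t • (c - q)) :
    ({x : Pt | ∃ l : ℝ, 0 < l ∧ x = q + l • (b - q)} ∩ T).Nonempty := by
  obtain ⟨p1, hp1, hp1T⟩ := ha
  obtain ⟨p2, hp2, hp2T⟩ := hc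
  rw [openSegment_eq_image'] at hp1 hp2
  obtain ⟨α, hα, rfl⟩ := hp1
  obtain ⟨β, hβ, rfl⟩ := hp2
  have hα0 : 0 < α := hα.1
  have hβ0 : 0 < β := hβ.1
  have hD : 0 < α * t + β * s := by positivity
  set μ : ℝ := α * t / (α * t + β * s) with hμ
  set l : ℝ := α * β / (α * t + β * s) with hl
  have hμ0 : 0 ≤ μ := by positivity
  have hμ1 : μ ≤ 1 := by
    rw [hμ, div_le_one hD]; nlinarith
  have hz : (1 - μ) • (q + α • (a - q)) + μ • (q + β • (c - q)) ∈ T :=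
    hT hp1T hp2T (by linarith) hμ0 (by ring)
  refine ⟨(1 - μ) • (q + α • (a - q)) + μ • (q + β • (c - q)), ⟨l, by positivity, ?_⟩, hz⟩
  have hbq : b - q = s • (a - q) + t • (c - q) := by rw [hb]; abel
  rw [hbq]
  match_scalars <;> rw [hμ, hl] <;> (field_simp <;> ring)
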